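/- arXiv:1404.4655 — 5 statements merged into one kernel-verified Lean document; each statement's English description precedes it below -/
import Mathlib

section
/- Let X be a finite set and ũ a quasi-ultrametric on X. Fix δ ≥ 0 and let ~_δ be the equivalence relation x ~_δ x' iff max(ũ(x,x'), ũ(x',x)) ≤ δ, with equivalence classes [x]_δ. Define an edge between distinct classes B_1, B_2 iff min over x_1 ∈ B_1, x_2 ∈ B_2 of ũ(x_1, x_2) is ≤ δ. Then this edge relation is unidirectional: if there is an edge from B_1 to B_2 (B_1 ≠ B_2) then there is no edge from B_2 to B_1. -/
/-- For a quasi-ultrametric `u` and resolution `δ ≥ 0`, the edge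
relation between distinct classes of `~_δ` (edge from `B₁` to `B₂` iff some
`x₁ ∈ B₁`, `x₂ ∈ B₂` have `u x₁ x₂ ≤ δ`) is unidirectional. -/
theorem quasiUltrametric_edge_unidirectional {X : Type*} [Fintype X]
    (u : X → X → ℝ)
    (hnonneg : ∀ x x', 0 ≤ u x x')
    (hid : ∀ x x', u x x' = 0 ↔ x = x')
    (hstri : ∀ x x' x'', u x x' ≤ max (u x x'') (u x'' x'))
    (δ : ℝ) (hδ : 0 ≤ δ)
    (B₁ B₂ : Set X)
    (h₁ : ∃ x, B₁ = {y | max (u x y) (u y x) ≤ δ})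
    (h₂ : ∃ x, B₂ = {y | max (u x y) (u y x) ≤ δ})
    (hne : B₁ ≠ B₂)
    (hE : ∃ x₁ ∈ B₁, ∃ x₂ ∈ B₂, u x₁ x₂ ≤ δ) :
    ¬ ∃ x₂ ∈ B₂, ∃ x₁ ∈ B₁, u x₂ x₁ ≤ δ := by
  rintro ⟨y₂, hy₂, y₁, hy₁, hyy⟩
  obtain ⟨x₁, hx₁, x₂, hx₂, hxx⟩ := hE
  obtain ⟨a, rfl⟩ := h₁
  obtain ⟨b, rfl⟩ := h₂
  simp only [Set.mem_setOf_eq, max_le_iff] at hx₁ hx₂ hy₁ hy₂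
  -- key: u a b ≤ δ and u b a ≤ δ
  have hab : u a b ≤ δ := by
    calc u a b ≤ max (u a x₁) (u x₁ b) := hstri a b x₁
      _ ≤ max δ (max (u x₁ x₂) (u x₂ b)) := by
          exact max_le_max hx₁.1 (hstri x₁ b x₂)
      _ ≤ δ := by
          apply max_le le_rfl (max_le hxx hx₂.2)
  have hba : u b a ≤ δ := by
    calc u b a ≤ max (u b y₂) (u y₂ a) := hstri b a y₂
      _ ≤ max δ (max (u y₂ y₁) (u y₁ a)) := by
          exact max_le_max hy₂.1 (hstri y₂ a y₁)
      _ ≤ δ := by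
          apply max_le le_rfl (max_le hyy hy₁.2)
  apply hne
  ext z
  simp only [Set.mem_setOf_eq, max_le_iff]
  constructor
  · rintro ⟨h1, h2⟩
    exact ⟨le_trans (hstri b z a) (max_le hba h1),
           le_trans (hstri z b a) (max_le h2 hab)⟩
  · rintro ⟨h1, h2⟩
    exact ⟨le_trans (hstri a z b) (max_le hab h1),
           le_trans (hstri z a b) (max_le h2 hba)⟩
end

section
/- Let X be a finite set and ũ a quasi-ultrametric on X. Fix δ ≥ 0 with equivalence relation ~_δ (x ~_δ x' iff max(ũ(x,x'), ũ(x',x)) ≤ δ) and edges between distinct classes B_1 → B_2 iff min_{x_1 ∈ B_1, x_2 ∈ B_2} ũ(x_1, x_2) ≤ δ. Then the edge relation is transitive: if B_1 → B_2 and B_2 → B_3 for pairwise distinct classes, then B_1 → B_3. -/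
/-- For a quasi-ultrametric `u` and resolution `δ ≥ 0`, the edge
relation between distinct classes of `~_δ` is transitive: edges `B₁ → B₂` and
`B₂ → B₃` between pairwise distinct classes imply an edge `B₁ → B₃`. -/
theorem quasiUltrametric_edge_transitive {X : Type*} [Fintype X]
    (u : X → X → ℝ)
    (hnonneg : ∀ x x', 0 ≤ u x x')
    (hid : ∀ x x', u x x' = 0 ↔ x = x')
    (hstri : ∀ x x' x'', u x x' ≤ max (u x x'') (u x'' x'))
    (δ : ℝ) (hδ : 0 ≤ δ)
    (B₁ B₂ B₃ : Set X)
    (h₁ : ∃ x, B₁ = {y | max (u x y) (u y x) ≤ δ})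
    (h₂ : ∃ x, B₂ = {y | max (u x y) (u y x) ≤ δ})
    (h₃ : ∃ x, B₃ = {y | max (u x y) (u y x) ≤ δ})
    (hne12 : B₁ ≠ B₂) (hne23 : B₂ ≠ B₃) (hne13 : B₁ ≠ B₃)
    (hE12 : ∃ x₁ ∈ B₁, ∃ x₂ ∈ B₂, u x₁ x₂ ≤ δ)
    (hE23 : ∃ x₂ ∈ B₂, ∃ x₃ ∈ B₃, u x₂ x₃ ≤ δ) :
    ∃ x₁ ∈ B₁, ∃ x₃ ∈ B₃, u x₁ x₃ ≤ δ := by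
  obtain ⟨c, hc⟩ := h₂
  obtain ⟨x₁, hx₁, x₂, hx₂, h12⟩ := hE12
  obtain ⟨x₂', hx₂', x₃, hx₃, h23⟩ := hE23
  rw [hc] at hx₂ hx₂'
  simp only [Set.mem_setOf_eq, max_le_iff] at hx₂ hx₂'
  refine ⟨x₁, hx₁, x₃, hx₃, ?_⟩
  have h22 : u x₂ x₂' ≤ δ :=
    (hstri x₂ x₂' c).trans (max_le hx₂.2 hx₂'.1)
  have h2'3 : u x₂ x₃ ≤ δ :=
    (hstri x₂ x₃ x₂').trans (max_le h22 h23)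
  exact (hstri x₁ x₃ x₂).trans (max_le h12 h2'3)
end

section
/- Let (X, A_X) be a finite network and ũ* the directed minimum chain cost. For any δ > 0 and any pair x, x' ∈ X with ũ*(x,x') ≥ δ, there exists a partition of X into two blocks B and B' with x ∈ B and x' ∈ B' such that A_X(b, b') ≥ δ for all b ∈ B and b' ∈ B'. -/
/-- The cost of a chain: maximum dissimilarity over consecutive links. -/
def chainCost {X : Type*} (A : X → X → ℝ) : List X → ℝ
  | [] => 0
  | [_] => 0
  | a :: b :: rest => max (A a b) (chainCost A (b :: rest))

/-- The directed minimum chain cost `ũ*` of a network `(X, A)`: the minimum,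
over all chains from `x` to `x'`, of the maximum link dissimilarity. -/
noncomputable def dmcc {X : Type*} (A : X → X → ℝ) (x x' : X) : ℝ :=
  sInf {r | ∃ c : List X, c.head? = some x ∧ c.getLast? = some x' ∧ chainCost A c = r}

lemma chainCost_nonneg {X : Type*} (A : X → X → ℝ) (hnonneg : ∀ x x', 0 ≤ A x x') :
    ∀ c : List X, 0 ≤ chainCost A c
  | [] => le_refl 0
  | [_] => le_refl 0
  | a :: b :: rest =>
      le_trans (chainCost_nonneg A hnonneg (b :: rest)) (le_max_right _ _)

lemma chainCost_append_single {X : Type*} (A : X → X → ℝ) :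
    ∀ (c : List X) (hne : c ≠ []) (b' : X),
      chainCost A (c ++ [b']) ≤ max (chainCost A c) (A (c.getLast hne) b')
  | [], hne, _ => absurd rfl hne
  | [a], _, b' => by
      simp only [List.singleton_append, chainCost, List.getLast_singleton]
      exact le_of_eq (max_comm _ _)
  | a :: b :: rest, _, b' => by
      have ih := chainCost_append_single A (b :: rest) (by simp) b'
      simp only [List.cons_append, chainCost] at *
      have : List.getLast (a :: b :: rest) (by simp) = List.getLast (b :: rest) (by simp) := by
        simp [List.getLast_cons]
      rw [this]
      exact max_le (le_trans (le_max_left _ _) (le_max_left _ _))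
        (le_trans ih (by
          exact max_le (le_trans (le_max_right _ _) (le_max_left _ _)) (le_max_right _ _)))

/-- If the directed minimum chain cost from `x` to `x'` is at
least `δ > 0`, then `X` splits into two blocks `B ∋ x` and `B' ∋ x'` with all
dissimilarities from `B` to `B'` at least `δ`. -/
theorem dmcc_separating_partition {X : Type*} [Fintype X]
    (A : X → X → ℝ)
    (hnonneg : ∀ x x', 0 ≤ A x x')
    (hid : ∀ x x', A x x' = 0 ↔ x = x')
    (δ : ℝ) (hδ : 0 < δ)
    (x x' : X) (h : δ ≤ dmcc A x x') :
    ∃ B B' : Set X, B ∪ B' = Set.univ ∧ B ∩ B' = ∅ ∧ x ∈ B ∧ x' ∈ B' ∧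
      ∀ b ∈ B, ∀ b' ∈ B', δ ≤ A b b' := by
  set S : X → Set ℝ := fun y =>
    {r | ∃ c : List X, c.head? = some x ∧ c.getLast? = some y ∧ chainCost A c = r}
  have hbdd : ∀ y, BddBelow (S y) := by
    intro y
    refine ⟨0, fun r hr => ?_⟩
    obtain ⟨c, _, _, hc⟩ := hr
    rw [← hc]; exact chainCost_nonneg A hnonneg c
  refine ⟨{y | dmcc A x y < δ}, {y | δ ≤ dmcc A x y}, ?_, ?_, ?_, ?_, ?_⟩
  · ext y; simp [lt_or_ge (dmcc A x y) δ]
  · ext y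
    simp only [Set.mem_inter_iff, Set.mem_setOf_eq, Set.mem_empty_iff_false, iff_false, not_and]
    exact fun hy => not_le.mpr hy
  · have h0 : (0 : ℝ) ∈ S x := ⟨[x], rfl, rfl, rfl⟩
    have : dmcc A x x ≤ 0 := csInf_le (hbdd x) h0
    exact lt_of_le_of_lt this hδ
  · exact h
  · intro b hb b' hb'
    by_contra hA
    push_neg at hA
    simp only [Set.mem_setOf_eq] at hb hb'
    have hne : (S b).Nonempty := ⟨chainCost A [x, b], [x, b], rfl, rfl, rfl⟩
    obtain ⟨r, hrS, hlt⟩ := Real.lt_sInf_add_pos hne (sub_pos.mpr hb)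
    have hsinf : sInf (S b) = dmcc A x b := rfl
    have hrδ : r < δ := by rw [hsinf] at hlt; linarith
    obtain ⟨c, hhead, hlast, hcost⟩ := hrS
    have hcne : c ≠ [] := by
      intro hc; rw [hc] at hhead; simp at hhead
    have hgl : c.getLast hcne = b := by
      rwa [List.getLast?_eq_getLast hcne, Option.some_inj] at hlast
    have hmem : chainCost A (c ++ [b']) ∈ S b' := by
      refine ⟨c ++ [b'], ?_, ?_, rfl⟩
      · cases c with
        | nil => exact absurd rfl hcne
        | cons a t => simpa using hhead
      · simp
    have hcost' : chainCost A (c ++ [b']) < δ := by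
      have := chainCost_append_single A c hcne b'
      rw [hgl, hcost] at this
      exact lt_of_le_of_lt this (max_lt hrδ hA)
    have : dmcc A x b' < δ := lt_of_le_of_lt (csInf_le (hbdd b') hmem) hcost'
    exact absurd hb' (not_le.mpr this)
end

section
/- Define the network distance between finite networks N_X = (X, A_X) and N_Y = (Y, A_Y) as d_N(N_X, N_Y) = (1/2) min_R max_{(x,y),(x',y') ∈ R} |A_X(x,x') − A_Y(y,y')|, where R ranges over correspondences between X and Y. Then d_N satisfies the triangle inequality: d_N(N_X, N_Y) ≤ d_N(N_X, N_Z) + d_N(N_Z, N_Y) for all finite networks N_X, N_Y, N_Z. -/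
/-- A correspondence between `X` and `Y`: a relation projecting onto both. -/
def IsCorrespondence {X Y : Type*} (R : Set (X × Y)) : Prop :=
  (∀ x : X, ∃ y : Y, (x, y) ∈ R) ∧ (∀ y : Y, ∃ x : X, (x, y) ∈ R)

/-- The distortion of a correspondence `R` between networks `(X, AX)` and
`(Y, AY)`. -/
noncomputable def distortion {X Y : Type*} (AX : X → X → ℝ) (AY : Y → Y → ℝ)
    (R : Set (X × Y)) : ℝ :=
  sSup {r | ∃ p ∈ R, ∃ q ∈ R, r = |AX p.1 q.1 - AY p.2 q.2|}

/-- The network distance: half the minimal distortion over correspondences. -/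
noncomputable def netDist {X Y : Type*} (AX : X → X → ℝ) (AY : Y → Y → ℝ) : ℝ :=
  (1/2) * sInf {r | ∃ R : Set (X × Y), IsCorrespondence R ∧ r = distortion AX AY R}

section aux

variable {X Y : Type*} [Finite X] [Finite Y]

lemma distSet_finite (AX : X → X → ℝ) (AY : Y → Y → ℝ) (R : Set (X × Y)) :
    {r | ∃ p ∈ R, ∃ q ∈ R, r = |AX p.1 q.1 - AY p.2 q.2|}.Finite := by
  have h : {r | ∃ p ∈ R, ∃ q ∈ R, r = |AX p.1 q.1 - AY p.2 q.2|}
      = (fun pq : (X × Y) × (X × Y) => |AX pq.1.1 pq.2.1 - AY pq.1.2 pq.2.2|) '' (R ×ˢ R) := by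
    ext r
    constructor
    · rintro ⟨p, hp, q, hq, rfl⟩; exact ⟨(p, q), ⟨hp, hq⟩, rfl⟩
    · rintro ⟨⟨p, q⟩, ⟨hp, hq⟩, rfl⟩; exact ⟨p, hp, q, hq, rfl⟩
  rw [h]
  exact (Set.toFinite _).image _

lemma le_distortion (AX : X → X → ℝ) (AY : Y → Y → ℝ) {R : Set (X × Y)}
    {p q : X × Y} (hp : p ∈ R) (hq : q ∈ R) :
    |AX p.1 q.1 - AY p.2 q.2| ≤ distortion AX AY R :=
  le_csSup (distSet_finite AX AY R).bddAbove ⟨p, hp, q, hq, rfl⟩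

lemma distortion_le (AX : X → X → ℝ) (AY : Y → Y → ℝ) {R : Set (X × Y)} {b : ℝ}
    (hb : 0 ≤ b) (h : ∀ p ∈ R, ∀ q ∈ R, |AX p.1 q.1 - AY p.2 q.2| ≤ b) :
    distortion AX AY R ≤ b := by
  apply Real.sSup_le _ hb
  rintro r ⟨p, hp, q, hq, rfl⟩
  exact h p hp q hq

lemma distortion_nonneg [Nonempty X] (AX : X → X → ℝ) (AY : Y → Y → ℝ)
    {R : Set (X × Y)} (hR : IsCorrespondence R) :
    0 ≤ distortion AX AY R := by
  obtain ⟨y, hy⟩ := hR.1 (Classical.arbitrary X)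
  exact le_trans (abs_nonneg _) (le_distortion AX AY hy hy)

lemma netDistSet_finite (AX : X → X → ℝ) (AY : Y → Y → ℝ) :
    {r | ∃ R : Set (X × Y), IsCorrespondence R ∧ r = distortion AX AY R}.Finite := by
  have h : {r | ∃ R : Set (X × Y), IsCorrespondence R ∧ r = distortion AX AY R}
      = (fun R : Set (X × Y) => distortion AX AY R) '' {R | IsCorrespondence R} := by
    ext r
    constructor
    · rintro ⟨R, hR, rfl⟩; exact ⟨R, hR, rfl⟩
    · rintro ⟨R, hR, rfl⟩; exact ⟨R, hR, rfl⟩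
  rw [h]
  exact (Set.toFinite _).image _

lemma netDistSet_nonempty [Nonempty X] [Nonempty Y] (AX : X → X → ℝ) (AY : Y → Y → ℝ) :
    {r | ∃ R : Set (X × Y), IsCorrespondence R ∧ r = distortion AX AY R}.Nonempty := by
  refine ⟨distortion AX AY Set.univ, Set.univ, ⟨?_, ?_⟩, rfl⟩
  · exact fun x => ⟨Classical.arbitrary Y, trivial⟩
  · exact fun y => ⟨Classical.arbitrary X, trivial⟩

end aux

/-- The network distance satisfies the triangle inequality. -/
theorem netDist_triangle {X Y Z : Type*}
    [Fintype X] [Fintype Y] [Fintype Z] [Nonempty X] [Nonempty Y] [Nonempty Z]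
    (AX : X → X → ℝ) (AY : Y → Y → ℝ) (AZ : Z → Z → ℝ)
    (hXnonneg : ∀ x x', 0 ≤ AX x x') (hXid : ∀ x x', AX x x' = 0 ↔ x = x')
    (hYnonneg : ∀ y y', 0 ≤ AY y y') (hYid : ∀ y y', AY y y' = 0 ↔ y = y')
    (hZnonneg : ∀ z z', 0 ≤ AZ z z') (hZid : ∀ z z', AZ z z' = 0 ↔ z = z') :
    netDist AX AY ≤ netDist AX AZ + netDist AZ AY := by
  classical
  -- the infima of the distortion sets are attained
  have hXZ := (netDistSet_nonempty AX AZ).csInf_mem (netDistSet_finite AX AZ)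
  have hZY := (netDistSet_nonempty AZ AY).csInf_mem (netDistSet_finite AZ AY)
  obtain ⟨R, hR, hRd⟩ := hXZ
  obtain ⟨S, hS, hSd⟩ := hZY
  -- composite correspondence
  set T : Set (X × Y) := {p | ∃ z, (p.1, z) ∈ R ∧ (z, p.2) ∈ S} with hT
  have hTcorr : IsCorrespondence T := by
    constructor
    · intro x
      obtain ⟨z, hz⟩ := hR.1 x
      obtain ⟨y, hy⟩ := hS.1 z
      exact ⟨y, z, hz, hy⟩
    · intro y
      obtain ⟨z, hz⟩ := hS.2 y
      obtain ⟨x, hx⟩ := hR.2 z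
      exact ⟨x, z, hx, hz⟩
  have hnn : 0 ≤ distortion AX AZ R + distortion AZ AY S :=
    add_nonneg (distortion_nonneg AX AZ hR) (distortion_nonneg AZ AY hS)
  have hTdis : distortion AX AY T ≤ distortion AX AZ R + distortion AZ AY S := by
    apply distortion_le AX AY hnn
    rintro ⟨x, y⟩ ⟨z, hxz, hzy⟩ ⟨x', y'⟩ ⟨z', hxz', hzy'⟩
    calc |AX x x' - AY y y'|
        ≤ |AX x x' - AZ z z'| + |AZ z z' - AY y y'| := by
          have := abs_sub_abs_le_abs_sub (AX x x' - AZ z z') (AY y y' - AZ z z')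
          calc |AX x x' - AY y y'| = |(AX x x' - AZ z z') - (AY y y' - AZ z z')| := by ring_nf
            _ ≤ |AX x x' - AZ z z'| + |AY y y' - AZ z z'| := abs_sub _ _
            _ = |AX x x' - AZ z z'| + |AZ z z' - AY y y'| := by rw [abs_sub_comm (AY y y')]
      _ ≤ distortion AX AZ R + distortion AZ AY S := by
          exact add_le_add (le_distortion AX AZ hxz hxz') (le_distortion AZ AY hzy hzy')
  have hmem : distortion AX AY T ∈
      {r | ∃ R : Set (X × Y), IsCorrespondence R ∧ r = distortion AX AY R} :=
    ⟨T, hTcorr, rfl⟩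
  have hle : sInf {r | ∃ R : Set (X × Y), IsCorrespondence R ∧ r = distortion AX AY R}
      ≤ distortion AX AY T :=
    csInf_le (netDistSet_finite AX AY).bddBelow hmem
  unfold netDist
  rw [hRd, hSd]
  nlinarith [hle, hTdis]
end

section
/- If two finite networks N_X = (X, A_X) and N_Y = (Y, A_Y) satisfy d_N(N_X, N_Y) = 0, then they are isomorphic: there exists a bijection φ : X → Y with A_X(x,x') = A_Y(φ(x), φ(x')) for all x, x' ∈ X. -/
/-- Networks at zero network distance are isomorphic. -/
theorem netDist_eq_zero_iso {X Y : Type*}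
    [Fintype X] [Fintype Y] [Nonempty X] [Nonempty Y]
    (AX : X → X → ℝ) (AY : Y → Y → ℝ)
    (hXnonneg : ∀ x x', 0 ≤ AX x x') (hXid : ∀ x x', AX x x' = 0 ↔ x = x')
    (hYnonneg : ∀ y y', 0 ≤ AY y y') (hYid : ∀ y y', AY y y' = 0 ↔ y = y')
    (h : netDist AX AY = 0) :
    ∃ φ : X ≃ Y, ∀ x x', AX x x' = AY (φ x) (φ x') := by
  classical
  have hTne : ({r | ∃ R : Set (X × Y), IsCorrespondence R ∧ r = distortion AX AY R}).Nonempty :=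
    ⟨distortion AX AY Set.univ, Set.univ,
      ⟨fun x => ⟨Classical.arbitrary Y, trivial⟩, fun y => ⟨Classical.arbitrary X, trivial⟩⟩, rfl⟩
  have hTfin : ({r | ∃ R : Set (X × Y), IsCorrespondence R ∧ r = distortion AX AY R}).Finite := by
    have hsub : {r | ∃ R : Set (X × Y), IsCorrespondence R ∧ r = distortion AX AY R}
        ⊆ Set.range (distortion AX AY) := by
      rintro r ⟨R, -, rfl⟩; exact ⟨R, rfl⟩
    exact (Set.finite_range _).subset hsub
  have hmem := hTne.csInf_mem hTfin
  have hInf0 : sInf {r | ∃ R : Set (X × Y), IsCorrespondence R ∧ r = distortion AX AY R} = 0 := by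
    unfold netDist at h; linarith
  rw [hInf0] at hmem
  obtain ⟨R, hRc, hRd⟩ := hmem
  have key : ∀ p ∈ R, ∀ q ∈ R, AX p.1 q.1 = AY p.2 q.2 := by
    intro p hp q hq
    have hS : |AX p.1 q.1 - AY p.2 q.2|
        ∈ {r | ∃ p ∈ R, ∃ q ∈ R, r = |AX p.1 q.1 - AY p.2 q.2|} := ⟨p, hp, q, hq, rfl⟩
    have hfin : ({r | ∃ p ∈ R, ∃ q ∈ R, r = |AX p.1 q.1 - AY p.2 q.2|}).Finite := by
      have hsub : {r | ∃ p ∈ R, ∃ q ∈ R, r = |AX p.1 q.1 - AY p.2 q.2|}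
          ⊆ Set.range (fun pq : (X × Y) × (X × Y) =>
              |AX pq.1.1 pq.2.1 - AY pq.1.2 pq.2.2|) := by
        rintro r ⟨p, hp, q, hq, rfl⟩; exact ⟨(p, q), rfl⟩
      exact (Set.finite_range _).subset hsub
    have hle : |AX p.1 q.1 - AY p.2 q.2| ≤ distortion AX AY R :=
      le_csSup hfin.bddAbove hS
    rw [← hRd] at hle
    have h0 : |AX p.1 q.1 - AY p.2 q.2| = 0 :=
      le_antisymm hle (abs_nonneg _)
    have := abs_eq_zero.mp h0
    linarith
  have huniq : ∀ x (y y' : Y), (x, y) ∈ R → (x, y') ∈ R → y = y' := by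
    intro x y y' h1 h2
    have hk := key (x, y) h1 (x, y') h2
    have hx : AX x x = 0 := (hXid x x).mpr rfl
    exact (hYid y y').mp (by simpa [hx] using hk.symm)
  have huniqX : ∀ (x x' : X) (y : Y), (x, y) ∈ R → (x', y) ∈ R → x = x' := by
    intro x x' y h1 h2
    have hk := key (x, y) h1 (x', y) h2
    have hy : AY y y = 0 := (hYid y y).mpr rfl
    exact (hXid x x').mp (by simpa [hy] using hk)
  choose f hf using hRc.1
  choose g hg using hRc.2
  have hgf : ∀ x, g (f x) = x := fun x => (huniqX x (g (f x)) (f x) (hf x) (hg (f x))).symm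
  have hfg : ∀ y, f (g y) = y := fun y => huniq (g y) (f (g y)) y (hf (g y)) (hg y)
  exact ⟨⟨f, g, hgf, hfg⟩, fun x x' => key (x, f x) (hf x) (x', f x') (hf x')⟩
end
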